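/- Algebraic ellipticity (Gårding) inequality for the Lamé coefficients: let n ≥ 1 be an integer and let μ′, λ be real numbers with μ′ ≥ 0 and 2μ′ + nλ ≥ 0. Then for every complex n×n matrix A one has μ′ Σ_{i,α=1}^n |A_{iα}|² + μ′ Re( Σ_{i,α=1}^n A_{αi} · conj(A_{iα}) ) + λ |Σ_{i=1}^n A_{ii}|² ≥ 0. -/

import Mathlib

noncomputable section

/-- algebraic ellipticity (Gårding) inequality for the Lamé coefficients:
if `μ′ ≥ 0` and `2μ′ + nλ ≥ 0`, then for every complex `n×n` matrix `A`,
`μ′ Σ|A_{iα}|² + μ′ Re(Σ A_{αi} conj(A_{iα})) + λ |Σ A_{ii}|² ≥ 0`. -/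
theorem lame_garding_pointwise
    (n : ℕ) (hn : 1 ≤ n) (μ' lam : ℝ) (hμ' : 0 ≤ μ') (hell : 0 ≤ 2 * μ' + n * lam)
    (A : Matrix (Fin n) (Fin n) ℂ) :
    0 ≤ μ' * ∑ i : Fin n, ∑ α : Fin n, ‖A i α‖ ^ 2
        + μ' * (∑ i : Fin n, ∑ α : Fin n, A α i * (starRingEnd ℂ) (A i α)).re
        + lam * ‖∑ i : Fin n, A i i‖ ^ 2 := by
  set S : ℝ := ∑ i : Fin n, ∑ α : Fin n, ‖A i α‖ ^ 2 with hS
  set C : ℝ := (∑ i : Fin n, ∑ α : Fin n, A α i * (starRingEnd ℂ) (A i α)).re with hC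
  set t : ℝ := ‖∑ i : Fin n, A i i‖ ^ 2 with ht
  set d : ℝ := ∑ i : Fin n, ‖A i i‖ ^ 2 with hd
  have hdnn : 0 ≤ d := Finset.sum_nonneg fun i _ => sq_nonneg _
  have htnn : 0 ≤ t := sq_nonneg _
  -- t ≤ n * d
  have h1 : t ≤ n * d := by
    have h0 : ‖∑ i : Fin n, A i i‖ ≤ ∑ i : Fin n, ‖A i i‖ :=
      norm_sum_le _ _
    calc t ≤ (∑ i : Fin n, ‖A i i‖) ^ 2 :=
        pow_le_pow_left₀ (norm_nonneg _) h0 2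
      _ ≤ (Finset.univ.card : ℝ) * ∑ i : Fin n, ‖A i i‖ ^ 2 :=
        sq_sum_le_card_mul_sum_sq
      _ = n * d := by simp [hd]
  -- sum of normSq of symmetrized matrix
  have key : ∑ i : Fin n, ∑ α : Fin n, Complex.normSq (A i α + A α i) = 2 * S + 2 * C := by
    have e1 : ∀ i α : Fin n, Complex.normSq (A i α + A α i)
        = Complex.normSq (A i α) + Complex.normSq (A α i)
          + 2 * (A α i * (starRingEnd ℂ) (A i α)).re := by
      intro i α
      simp [Complex.normSq_add, Complex.normSq_apply, Complex.mul_re]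
      ring
    simp only [e1, Finset.sum_add_distrib]
    have c1 : ∑ i : Fin n, ∑ α : Fin n, Complex.normSq (A α i)
        = ∑ i : Fin n, ∑ α : Fin n, Complex.normSq (A i α) := Finset.sum_comm
    have c2 : S = ∑ i : Fin n, ∑ α : Fin n, Complex.normSq (A i α) := by
      simp [hS, Complex.sq_norm]
    have c3 : C = ∑ i : Fin n, ∑ α : Fin n, (A α i * (starRingEnd ℂ) (A i α)).re := by
      simp [hC, Complex.re_sum]
    rw [c1, ← c2, c3]
    simp only [← Finset.mul_sum]
    ring
  -- S + C ≥ 2 d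
  have h2 : 2 * d ≤ S + C := by
    have hge : ∑ i : Fin n, Complex.normSq (A i i + A i i)
        ≤ ∑ i : Fin n, ∑ α : Fin n, Complex.normSq (A i α + A α i) := by
      apply Finset.sum_le_sum
      intro i _
      exact Finset.single_le_sum (f := fun α => Complex.normSq (A i α + A α i))
        (fun α _ => Complex.normSq_nonneg _) (Finset.mem_univ i)
    have hdiag : ∑ i : Fin n, Complex.normSq (A i i + A i i) = 4 * d := by
      rw [hd, Finset.mul_sum]
      apply Finset.sum_congr rfl
      intro i _
      rw [Complex.sq_norm]
      have : A i i + A i i = (2 : ℂ) * A i i := by ring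
      rw [this, Complex.normSq_mul]
      norm_num
    rw [key, hdiag] at hge
    linarith
  have hSC : 0 ≤ S + C := by
    have := Finset.sum_nonneg (fun i (_ : i ∈ Finset.univ) =>
      Finset.sum_nonneg (fun α (_ : α ∈ (Finset.univ : Finset (Fin n))) =>
        Complex.normSq_nonneg (A i α + A α i)))
    rw [key] at this; linarith
  rcases le_or_gt 0 lam with hl | hl
  · have : 0 ≤ lam * t := mul_nonneg hl htnn
    nlinarith
  · have hln : (n : ℝ) * lam ≤ 0 := mul_nonpos_of_nonneg_of_nonpos (Nat.cast_nonneg n) hl.le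
    have : lam * t ≥ lam * (n * d) := by
      apply mul_le_mul_of_nonpos_left h1 hl.le
    nlinarith [mul_le_mul_of_nonneg_left h2 hμ']
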